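/- Let $A \subseteq \mathbb{R}^n$ be an affine subspace such that $A$ is the affine span of $A \cap \mathbb{Q}^n$ (i.e., $A$ is defined over the rationals), let $U$ be a nonempty open subset of $A$ (in the subspace topology), and let $x \in U$. Then there exist finitely many points $b_1, \ldots, b_m \in U \cap \mathbb{Q}^n$ and positive real numbers $r_1, \ldots, r_m$ with $\sum_{i=1}^m r_i = 1$ and $x = \sum_{i=1}^m r_i b_i$. -/

import Mathlib

theorem stmt_16 (n : ℕ) (A : AffineSubspace ℝ (Fin n → ℝ))
    (hA : A = affineSpan ℝ ((A : Set (Fin n → ℝ)) ∩ {p | ∀ i, ∃ s : ℚ, p i = (s : ℝ)}))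
    (U : Set (Fin n → ℝ)) (hUA : U ⊆ (A : Set (Fin n → ℝ)))
    (hU : ∃ V : Set (Fin n → ℝ), IsOpen V ∧ U = V ∩ (A : Set (Fin n → ℝ)))
    (x : Fin n → ℝ) (hx : x ∈ U) :
    ∃ (m : ℕ) (b : Fin m → (Fin n → ℝ)) (r : Fin m → ℝ),
      (∀ i, b i ∈ U) ∧ (∀ i j, ∃ s : ℚ, b i j = (s : ℝ)) ∧ (∀ i, 0 < r i) ∧
      ∑ i, r i = 1 ∧ x = ∑ i, r i • b i := by
  classical
  obtain ⟨V, hV, hUV⟩ := hU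
  set S : Set (Fin n → ℝ) := (A : Set (Fin n → ℝ)) ∩ {p | ∀ i, ∃ s : ℚ, p i = (s : ℝ)} with hS
  have hxA : x ∈ (A : Set (Fin n → ℝ)) := hUA hx
  -- S is nonempty
  have hSne : S.Nonempty := by
    rw [← affineSpan_nonempty (k := ℝ), ← hA]
    exact ⟨x, hxA⟩
  obtain ⟨s₀, hs₀⟩ := hSne
  have hs₀A : s₀ ∈ (A : Set (Fin n → ℝ)) := hs₀.1
  -- direction of A
  have hdir : A.direction = Submodule.span ℝ ((· -ᵥ s₀) '' S) := by
    rw [hA, direction_affineSpan, vectorSpan_eq_span_vsub_set_right ℝ hs₀]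
  have hxd : x - s₀ ∈ Submodule.span ℝ ((· -ᵥ s₀) '' S) := by
    rw [← hdir]
    exact AffineSubspace.vsub_mem_direction hxA hs₀A
  obtain ⟨k, f, g, hfg⟩ := Submodule.mem_span_set'.1 hxd
  set d : Fin k → (Fin n → ℝ) := fun i => (g i : Fin n → ℝ) with hd
  have hdmem : ∀ i, d i ∈ A.direction := fun i => by
    rw [hdir]; exact Submodule.subset_span (g i).2
  have hdrat : ∀ i j, ∃ s : ℚ, d i j = (s : ℝ) := by
    intro i j
    obtain ⟨p, hp, hpe⟩ := (g i).2
    obtain ⟨s₁, hs₁⟩ := hp.2 j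
    obtain ⟨s₂, hs₂⟩ := hs₀.2 j
    refine ⟨s₁ - s₂, ?_⟩
    have hdi : d i = p - s₀ := hpe.symm
    rw [hdi, Pi.sub_apply, hs₁, hs₂]
    push_cast
    ring
  have hxeq : x = s₀ + ∑ i, f i • d i := by
    rw [hfg]; abel
  -- continuity: the parametrization map
  set φ : (Fin k → ℝ) → (Fin n → ℝ) := fun t => s₀ + ∑ i, t i • d i with hφ
  have hφcont : Continuous φ := by
    apply continuous_const.add
    exact continuous_finset_sum _ fun i _ => ((continuous_apply i).smul continuous_const)
  have hφA : ∀ t, φ t ∈ (A : Set (Fin n → ℝ)) := by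
    intro t
    have hv : (∑ i, t i • d i) ∈ A.direction :=
      Submodule.sum_mem _ fun i _ => Submodule.smul_mem _ _ (hdmem i)
    have := AffineSubspace.vadd_mem_of_mem_direction hv hs₀A
    simpa [φ, add_comm] using this
  have hxV : x ∈ V := by rw [hUV] at hx; exact hx.1
  have hopen : IsOpen (φ ⁻¹' V) := hV.preimage hφcont
  have hfmem : f ∈ φ ⁻¹' V := by
    simp only [Set.mem_preimage, hφ]
    rw [← hxeq]; exact hxV
  obtain ⟨δ, hδpos, hball⟩ := Metric.isOpen_iff.1 hopen f hfmem
  -- choose rational τ with 0 < τ < δ/2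
  obtain ⟨τ, hτ0, hτδ⟩ := exists_rat_btwn (by linarith : (0:ℝ) < δ/2)
  have hτ0' : (0:ℝ) < (τ:ℝ) := by exact_mod_cast hτ0
  -- choose rational t i slightly below f i
  set ε : ℝ := min (δ/2) ((τ:ℝ)/(k+1)) with hε
  have hεpos : 0 < ε := lt_min (by linarith) (by positivity)
  have hchoice : ∀ i : Fin k, ∃ q : ℚ, f i - ε < (q:ℝ) ∧ (q:ℝ) < f i := by
    intro i; exact exists_rat_btwn (by linarith)
  choose t ht1 ht2 using hchoice
  set a : Fin k → ℝ := fun i => f i - (t i : ℝ) with ha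
  have hapos : ∀ i, 0 < a i := fun i => by simp only [ha]; linarith [ht2 i]
  have haε : ∀ i, a i < ε := fun i => by simp only [ha]; linarith [ht1 i]
  -- the base point
  set p : Fin n → ℝ := φ (fun i => (t i : ℝ)) with hp
  have hpx : x = p + ∑ i, a i • d i := by
    rw [hxeq]
    simp only [hp, hφ, ha, sub_smul, Finset.sum_sub_distrib]
    abel
  -- membership in V of perturbed points
  have hmemV : ∀ t' : Fin k → ℝ, (∀ i, |t' i - f i| < δ) → φ t' ∈ V := by
    intro t' h
    apply hball
    rw [Metric.mem_ball, dist_pi_lt_iff hδpos]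
    intro i
    rw [Real.dist_eq]
    exact h i
  have hεδ : ε ≤ δ/2 := min_le_left _ _
  have hpV : p ∈ V := by
    apply hmemV
    intro i
    have := hapos i; have := haε i
    rw [abs_sub_comm, show f i - (t i : ℝ) = a i from rfl, abs_of_pos (hapos i)]
    linarith
  have hpU : p ∈ U := by rw [hUV]; exact ⟨hpV, hφA _⟩
  -- the perturbed points
  set b' : Fin k → (Fin n → ℝ) := fun i => p + (τ:ℝ) • d i with hb'
  have hb'φ : ∀ i, b' i = φ (fun l => (t l : ℝ) + if l = i then (τ:ℝ) else 0) := by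
    intro i
    simp only [hb', hp, hφ, add_smul, Finset.sum_add_distrib, ite_smul, zero_smul,
      Finset.sum_ite_eq', Finset.mem_univ, if_true]
    abel
  have hb'U : ∀ i, b' i ∈ U := by
    intro i
    rw [hUV, hb'φ i]
    refine ⟨hmemV _ fun l => ?_, hφA _⟩
    by_cases hl : l = i
    · simp only [hl, if_true]
      have := hapos i; have := haε i
      have : |(t i : ℝ) + (τ:ℝ) - f i| ≤ |(t i : ℝ) - f i| + (τ:ℝ) := by
        calc |(t i : ℝ) + (τ:ℝ) - f i| = |((t i : ℝ) - f i) + (τ:ℝ)| := by ring_nf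
          _ ≤ |(t i : ℝ) - f i| + |(τ:ℝ)| := abs_add_le _ _
          _ = |(t i : ℝ) - f i| + (τ:ℝ) := by rw [abs_of_pos hτ0']
      have h2 : |(t i : ℝ) - f i| < ε := by
        rw [abs_sub_comm, show f i - (t i : ℝ) = a i from rfl, abs_of_pos (hapos i)]
        exact haε i
      linarith
    · simp only [hl, if_false, add_zero]
      rw [abs_sub_comm, show f l - (t l : ℝ) = a l from rfl, abs_of_pos (hapos l)]
      linarith [haε l, hεδ]
  -- rationality of coordinates
  choose σ hσ using hs₀.2
  choose D hD using hdrat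
  have hprat : ∀ j, ∃ s : ℚ, p j = (s : ℝ) := by
    intro j
    refine ⟨σ j + ∑ i, t i * D i j, ?_⟩
    simp only [hp, hφ, Pi.add_apply, Finset.sum_apply, Pi.smul_apply, smul_eq_mul,
      hσ j, hD]
    push_cast
    ring
  have hb'rat : ∀ i j, ∃ s : ℚ, b' i j = (s : ℝ) := by
    intro i j
    obtain ⟨s, hs⟩ := hprat j
    refine ⟨s + τ * D i j, ?_⟩
    simp only [hb', Pi.add_apply, Pi.smul_apply, smul_eq_mul, hs, hD]
    push_cast
    ring
  -- weights
  set r' : Fin k → ℝ := fun i => a i / (τ:ℝ) with hr'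
  have hr'pos : ∀ i, 0 < r' i := fun i => div_pos (hapos i) hτ0'
  have hr'lt : ∑ i, r' i < 1 := by
    have h1 : ∀ i : Fin k, r' i ≤ 1/((k:ℝ)+1) := by
      intro i
      have hak : a i ≤ (τ:ℝ)/((k:ℝ)+1) := le_of_lt (lt_of_lt_of_le (haε i) (min_le_right _ _))
      have hk1 : (0:ℝ) < (k:ℝ)+1 := by positivity
      rw [hr']
      rw [div_le_div_iff₀ hτ0' hk1]
      have h2 := mul_le_mul_of_nonneg_right hak (le_of_lt hk1)
      rw [div_mul_cancel₀ _ (ne_of_gt hk1)] at h2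
      linarith
    calc ∑ i, r' i ≤ ∑ _i : Fin k, 1/((k:ℝ)+1) := Finset.sum_le_sum fun i _ => h1 i
      _ = (k:ℝ)/((k:ℝ)+1) := by
          rw [Finset.sum_const, Finset.card_univ, Fintype.card_fin, nsmul_eq_mul]
          field_simp
      _ < 1 := by
          rw [div_lt_one (by positivity)]
          linarith
  refine ⟨k + 1, Fin.cons p b', Fin.cons (1 - ∑ i, r' i) r', ?_, ?_, ?_, ?_, ?_⟩
  · intro i
    refine Fin.cases ?_ ?_ i
    · exact hpU
    · exact hb'U
  · intro i
    refine Fin.cases ?_ ?_ i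
    · exact hprat
    · exact hb'rat
  · intro i
    refine Fin.cases ?_ ?_ i
    · simp only [Fin.cons_zero]; linarith [hr'lt]
    · intro j; simpa using hr'pos j
  · rw [Fin.sum_univ_succ]
    simp only [Fin.cons_zero, Fin.cons_succ]
    ring
  · rw [Fin.sum_univ_succ, hpx]
    simp only [Fin.cons_zero, Fin.cons_succ]
    have : ∀ i, r' i • b' i = r' i • p + a i • d i := by
      intro i
      rw [hb', smul_add, smul_smul, hr', div_mul_cancel₀ _ (ne_of_gt hτ0')]
    simp only [this, Finset.sum_add_distrib, ← Finset.sum_smul, sub_smul, one_smul]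
    abel
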